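/- For every integer n ≥ 1 there exists a constant M > 0 such that for every integer g ≥ 0 with 2g−2+n ≥ 1: (3g−3+n)!/g! ≤ M · (3√3/2)^{2g−2+n} · Γ(2g−2+n), where Γ denotes the Gamma function. -/

import Mathlib

private lemma lemA (g : ℕ) :
    4 ^ g * (3 * g).factorial ≤ 27 ^ g * g.factorial * (2 * g).factorial := by
  induction g with
  | zero => simp
  | succ g ih =>
    have key : 4 * ((3 * g + 3) * ((3 * g + 2) * (3 * g + 1)))
        ≤ 27 * ((g + 1) * ((2 * g + 2) * (2 * g + 1))) := by nlinarith
    calc 4 ^ (g + 1) * (3 * (g + 1)).factorial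
        = 4 * ((3 * g + 3) * ((3 * g + 2) * (3 * g + 1)))
            * (4 ^ g * (3 * g).factorial) := by
          rw [show 3 * (g + 1) = 3 * g + 1 + 1 + 1 by ring]
          simp only [Nat.factorial_succ, pow_succ]; ring
      _ ≤ 27 * ((g + 1) * ((2 * g + 2) * (2 * g + 1)))
            * (27 ^ g * g.factorial * (2 * g).factorial) := Nat.mul_le_mul key ih
      _ = 27 ^ (g + 1) * (g + 1).factorial * (2 * (g + 1)).factorial := by
          rw [show 2 * (g + 1) = 2 * g + 1 + 1 by ring]
          simp only [Nat.factorial_succ, pow_succ]; ring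

private lemma lemB (g : ℕ) : ∀ a : ℕ,
    2 ^ a * (3 * g + a).factorial * (2 * g).factorial
      ≤ 3 ^ a * (3 * g).factorial * (2 * g + a).factorial := by
  intro a
  induction a with
  | zero => simp
  | succ a ih =>
    have key : 2 * (3 * g + a + 1) ≤ 3 * (2 * g + a + 1) := by omega
    calc 2 ^ (a + 1) * (3 * g + (a + 1)).factorial * (2 * g).factorial
        = 2 * (3 * g + a + 1)
            * (2 ^ a * (3 * g + a).factorial * (2 * g).factorial) := by
          rw [show 3 * g + (a + 1) = (3 * g + a) + 1 by ring]
          simp only [Nat.factorial_succ, pow_succ]; ring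
      _ ≤ 3 * (2 * g + a + 1)
            * (3 ^ a * (3 * g).factorial * (2 * g + a).factorial) :=
          Nat.mul_le_mul key ih
      _ = 3 ^ (a + 1) * (3 * g).factorial * (2 * g + (a + 1)).factorial := by
          rw [show 2 * g + (a + 1) = (2 * g + a) + 1 by ring]
          simp only [Nat.factorial_succ, pow_succ]; ring

private lemma lemC (g n : ℕ) :
    2 ^ n * 4 ^ g * (3 * g + n).factorial
      ≤ 3 ^ n * 27 ^ g * g.factorial * (2 * g + n).factorial := by
  have hA := lemA g
  have hB := lemB g n
  have hpos : 0 < (2 * g).factorial * (3 * g).factorial :=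
    Nat.mul_pos (Nat.factorial_pos _) (Nat.factorial_pos _)
  refine Nat.le_of_mul_le_mul_right ?_ hpos
  calc 2 ^ n * 4 ^ g * (3 * g + n).factorial * ((2 * g).factorial * (3 * g).factorial)
      = (2 ^ n * (3 * g + n).factorial * (2 * g).factorial)
          * (4 ^ g * (3 * g).factorial) := by ring
    _ ≤ (3 ^ n * (3 * g).factorial * (2 * g + n).factorial)
          * (27 ^ g * g.factorial * (2 * g).factorial) := Nat.mul_le_mul hB hA
    _ = 3 ^ n * 27 ^ g * g.factorial * (2 * g + n).factorial
          * ((2 * g).factorial * (3 * g).factorial) := by ring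

private lemma fac3 (m : ℕ) :
    (m + 3).factorial = (m + 3) * ((m + 2) * ((m + 1) * m.factorial)) := by
  rw [show m + 3 = m + 1 + 1 + 1 by ring]
  simp only [Nat.factorial_succ]
  try ring

private lemma lemE (g k n : ℕ) (h : 2 * g + n = k + 3) :
    2 ^ n * 4 ^ g * (g + k).factorial ≤ 3 ^ n * 27 ^ g * g.factorial * k.factorial := by
  have hC := lemC g n
  have h3 : 3 * g + n = (g + k) + 3 := by omega
  rw [h3, h, fac3, fac3] at hC
  have hmul : (k + 3) * ((k + 2) * (k + 1)) ≤ (g + k + 3) * ((g + k + 2) * (g + k + 1)) := by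
    have h1 : k + 3 ≤ g + k + 3 := by omega
    have h2 : k + 2 ≤ g + k + 2 := by omega
    have h4 : k + 1 ≤ g + k + 1 := by omega
    exact Nat.mul_le_mul h1 (Nat.mul_le_mul h2 h4)
  have hPg : 0 < (g + k + 3) * ((g + k + 2) * (g + k + 1)) := by positivity
  refine Nat.le_of_mul_le_mul_right ?_ hPg
  calc 2 ^ n * 4 ^ g * (g + k).factorial * ((g + k + 3) * ((g + k + 2) * (g + k + 1)))
      = 2 ^ n * 4 ^ g * ((g + k + 3) * ((g + k + 2) * ((g + k + 1) * (g + k).factorial))) := by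
        ring
    _ ≤ 3 ^ n * 27 ^ g * g.factorial * ((k + 3) * ((k + 2) * ((k + 1) * k.factorial))) := hC
    _ = 3 ^ n * 27 ^ g * g.factorial * k.factorial * ((k + 3) * ((k + 2) * (k + 1))) := by ring
    _ ≤ 3 ^ n * 27 ^ g * g.factorial * k.factorial
          * ((g + k + 3) * ((g + k + 2) * (g + k + 1))) := by
        exact Nat.mul_le_mul_left _ hmul

/-- Stirling-type inequality `(3g-3+n)!/g! ≤ M (3√3/2)^{2g-2+n} Γ(2g-2+n)`
for fixed `n ≥ 1`. -/
theorem stmt_14 (n : ℕ) (hn : 1 ≤ n) :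
    ∃ M : ℝ, 0 < M ∧
      ∀ g : ℕ, 3 ≤ 2 * g + n →
        (Nat.factorial (3 * g + n - 3) : ℝ) / (Nat.factorial g : ℝ)
          ≤ M * (3 * Real.sqrt 3 / 2) ^ (2 * g + n - 2) *
              Real.Gamma (2 * (g : ℝ) - 2 + n) := by
  have hs0 : (0:ℝ) < Real.sqrt 3 := Real.sqrt_pos.mpr (by norm_num)
  have hs : Real.sqrt 3 ^ 2 = 3 := Real.sq_sqrt (by norm_num)
  have hc2 : (3 * Real.sqrt 3 / 2) ^ 2 = 27 / 4 := by
    have : (3 * Real.sqrt 3 / 2) ^ 2 = 9 * Real.sqrt 3 ^ 2 / 4 := by ring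
    rw [this, hs]; norm_num
  refine ⟨27 / 4 * (Real.sqrt 3)⁻¹ ^ n, by positivity, ?_⟩
  intro g hg
  set k := 2 * g + n - 3 with hkdef
  have hk3 : 2 * g + n = k + 3 := by omega
  have hgk : 3 * g + n - 3 = g + k := by omega
  have hkm : 2 * g + n - 2 = k + 1 := by omega
  rw [hgk, hkm]
  have hGamma : Real.Gamma (2 * (g:ℝ) - 2 + (n:ℝ)) = (k.factorial : ℝ) := by
    have hcast : 2 * (g:ℝ) - 2 + (n:ℝ) = (k:ℝ) + 1 := by
      have : 2 * (g:ℝ) + (n:ℝ) = (k:ℝ) + 3 := by exact_mod_cast hk3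
      linarith
    rw [hcast, Real.Gamma_nat_eq_factorial]
  rw [hGamma]
  have hkey : 27 / 4 * (Real.sqrt 3)⁻¹ ^ n * (3 * Real.sqrt 3 / 2) ^ (k + 1)
      = (27 / 4 : ℝ) ^ g * (3 / 2 : ℝ) ^ n := by
    have e1 : (3 * Real.sqrt 3 / 2) ^ (k + 3)
        = (3 * Real.sqrt 3 / 2) ^ (k + 1) * (27 / 4) := by
      rw [show k + 3 = (k + 1) + 2 by ring, pow_add, hc2]
    have e2 : (3 * Real.sqrt 3 / 2) ^ (k + 3)
        = ((27 : ℝ) / 4) ^ g * (3 * Real.sqrt 3 / 2) ^ n := by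
      rw [← hk3, pow_add, pow_mul, hc2]
    have e3 : (Real.sqrt 3)⁻¹ ^ n * (3 * Real.sqrt 3 / 2) ^ n = (3 / 2 : ℝ) ^ n := by
      rw [← mul_pow]
      congr 1
      field_simp
    have e4 : (Real.sqrt 3)⁻¹ ^ n * (3 * Real.sqrt 3 / 2) ^ (k + 3)
        = (27 / 4 : ℝ) ^ g * (3 / 2 : ℝ) ^ n := by
      rw [e2, ← mul_assoc, mul_comm ((Real.sqrt 3)⁻¹ ^ n), mul_assoc, e3]
    calc 27 / 4 * (Real.sqrt 3)⁻¹ ^ n * (3 * Real.sqrt 3 / 2) ^ (k + 1)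
        = (Real.sqrt 3)⁻¹ ^ n * ((3 * Real.sqrt 3 / 2) ^ (k + 1) * (27 / 4)) := by ring
      _ = (Real.sqrt 3)⁻¹ ^ n * (3 * Real.sqrt 3 / 2) ^ (k + 3) := by rw [e1]
      _ = (27 / 4 : ℝ) ^ g * (3 / 2 : ℝ) ^ n := e4
  rw [hkey]
  have hE := lemE g k n hk3
  have hER : (2:ℝ) ^ n * 4 ^ g * ((g + k).factorial : ℝ)
      ≤ 3 ^ n * 27 ^ g * (g.factorial : ℝ) * (k.factorial : ℝ) := by exact_mod_cast hE
  rw [div_le_iff₀ (by positivity : (0:ℝ) < (g.factorial : ℝ))]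
  have hpos : (0:ℝ) < 2 ^ n * 4 ^ g := by positivity
  rw [show ((27:ℝ)/4) ^ g * ((3:ℝ)/2) ^ n * (k.factorial : ℝ) * (g.factorial : ℝ)
      = (3 ^ n * 27 ^ g * (g.factorial : ℝ) * (k.factorial : ℝ)) / (2 ^ n * 4 ^ g) by
        rw [div_pow, div_pow]; field_simp]
  rw [le_div_iff₀ hpos]
  calc ((g + k).factorial : ℝ) * (2 ^ n * 4 ^ g)
      = 2 ^ n * 4 ^ g * ((g + k).factorial : ℝ) := by ring
    _ ≤ _ := hER
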